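/- Let f(x,y,z,u) = 8x² + 12xy + 18y² + 12yz + 12z² + 12xu + 12u². For every nonzero (x,y,z,u) ∈ ℤ⁴ one has f(x,y,z,u) ∈ ℋ; that is, f(x,y,z,u) ≥ 8 and f(x,y,z,u) ≡ 0 or 2 (mod 6). In particular, neither 2 nor 6 is a value of f on nonzero vectors. -/

import Mathlib

/-- The quadratic form f(x,y,z,u) = 8x² + 12xy + 18y² + 12yz + 12z² + 12xu + 12u². -/
def fForm (x y z u : ℤ) : ℤ :=
  8*x^2 + 12*x*y + 18*y^2 + 12*y*z + 12*z^2 + 12*x*u + 12*u^2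

set_option maxHeartbeats 1000000 in
lemma fForm_key (x y z u : ℤ) : 3*(x^2+y^2+z^2+u^2) ≤ 2 * fForm x y z u := by
  unfold fForm
  nlinarith [sq_nonneg (13*x+12*y+12*u), sq_nonneg (7*z+4*y), sq_nonneg (457*y-336*u),
    sq_nonneg u]

set_option maxHeartbeats 4000000 in
lemma fForm_ge (x y z u : ℤ) (h : ¬(x = 0 ∧ y = 0 ∧ z = 0 ∧ u = 0)) :
    8 ≤ fForm x y z u := by
  by_contra hlt
  push_neg at hlt
  have hk := fForm_key x y z u
  have hb : x^2+y^2+z^2+u^2 ≤ 4 := by omega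
  have hx : x^2 ≤ 4 := by nlinarith [sq_nonneg y, sq_nonneg z, sq_nonneg u]
  have hy : y^2 ≤ 4 := by nlinarith [sq_nonneg x, sq_nonneg z, sq_nonneg u]
  have hz : z^2 ≤ 4 := by nlinarith [sq_nonneg x, sq_nonneg y, sq_nonneg u]
  have hu : u^2 ≤ 4 := by nlinarith [sq_nonneg x, sq_nonneg y, sq_nonneg z]
  have hx' : -2 ≤ x ∧ x ≤ 2 := by constructor <;> nlinarith
  have hy' : -2 ≤ y ∧ y ≤ 2 := by constructor <;> nlinarith
  have hz' : -2 ≤ z ∧ z ≤ 2 := by constructor <;> nlinarith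
  have hu' : -2 ≤ u ∧ u ≤ 2 := by constructor <;> nlinarith
  unfold fForm at hlt
  obtain ⟨hx1, hx2⟩ := hx'; obtain ⟨hy1, hy2⟩ := hy'
  obtain ⟨hz1, hz2⟩ := hz'; obtain ⟨hu1, hu2⟩ := hu'
  interval_cases x <;> interval_cases y <;> interval_cases z <;> interval_cases u <;>
    (revert h hlt; norm_num)

lemma fForm_mod (x y z u : ℤ) : fForm x y z u % 6 = 0 ∨ fForm x y z u % 6 = 2 := by
  have h1 : fForm x y z u = 6*(x^2+2*x*y+3*y^2+2*y*z+2*z^2+2*x*u+2*u^2) + 2*x^2 := by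
    unfold fForm; ring
  have h2 : x = 3*(x/3) + x % 3 := by omega
  have h3 : x % 3 = 0 ∨ x % 3 = 1 ∨ x % 3 = 2 := by omega
  have h4 : 2*x^2 = 6*(3*(x/3)^2 + 2*(x/3)*(x%3)) + 2*(x%3)^2 := by
    nth_rewrite 1 [h2]; ring
  have h5 : fForm x y z u % 6 = 2*(x % 3)^2 % 6 := by
    have h6 : fForm x y z u = 2*(x%3)^2 +
        (x^2+2*x*y+3*y^2+2*y*z+2*z^2+2*x*u+2*u^2 + 3*(x/3)^2 + 2*(x/3)*(x%3))*6 := by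
      rw [h1, h4]; ring
    rw [h6, Int.add_mul_emod_self_right]
  rcases h3 with h | h | h <;> rw [h5, h] <;> decide

/-- every value of f on a nonzero vector lies in the Hassett set:
it is at least 8 and congruent to 0 or 2 mod 6. -/
theorem fForm_value_mem_Hassett :
    ∀ x y z u : ℤ, ¬(x = 0 ∧ y = 0 ∧ z = 0 ∧ u = 0) →
      8 ≤ fForm x y z u ∧ (fForm x y z u % 6 = 0 ∨ fForm x y z u % 6 = 2) := by
  intro x y z u h
  exact ⟨fForm_ge x y z u h, fForm_mod x y z u⟩
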